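/- arXiv:2203.09357 — 3 statements merged into one kernel-verified Lean document; each statement's English description precedes it below -/
import Mathlib

section
/- Let A be a self-adjoint operator on a finite-dimensional complex Hilbert space, g : ℝ → ℝ, and β an eigenvalue of g(A). The measurement-update maps T_{(β, g(A))} and T_{(g⁻¹(β), A)} agree on all density operators if and only if g⁻¹(β) ∩ σ(A) is a singleton. Here T_{(Δ,A)}(ρ) = (1/tr(ρ E_Δ)) Σ_{α∈Δ} E_α ρ E_α when tr(ρ E_Δ) ≠ 0 and 0 otherwise, with E_Δ = Σ_{α∈Δ∩σ(A)} E_α and E_α the eigenprojections of A, and T_{(β,g(A))} is the corresponding map for the operator g(A) with Δ = {β}. -/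
open Matrix
open scoped ComplexOrder
open scoped Classical

private lemma sum_mulVec'' {n : ℕ} {ι : Type*} (s : Finset ι)
    (f : ι → Matrix (Fin n) (Fin n) ℂ) (v : Fin n → ℂ) :
    (∑ i ∈ s, f i) *ᵥ v = ∑ i ∈ s, f i *ᵥ v := by
  classical
  induction s using Finset.induction with
  | empty => simp
  | insert _ _ h ih => rw [Finset.sum_insert h, Finset.sum_insert h, Matrix.add_mulVec, ih]

private lemma exists_mulVec_ne' {n : ℕ} {M : Matrix (Fin n) (Fin n) ℂ} (h : M ≠ 0) :
    ∃ u, M *ᵥ u ≠ 0 := by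
  by_contra hc
  push_neg at hc
  apply h
  ext i j
  have := congrFun (hc (Pi.single j 1)) i
  simpa [Matrix.mulVec_single] using this

/-- Let `A = ∑ α ∈ σA, α • E α` be the spectral decomposition of the
self-adjoint `A` (nonzero orthogonal eigenprojections summing to `1`), let
`g : ℝ → ℝ` and let `β` be an eigenvalue of `g(A)`, i.e. `β ∈ g '' σA`, with
eigenprojection `Fβ = ∑_{α ∈ σA, g α = β} E α`. The measurement-update maps
`T_{(β, g(A))}` and `T_{(g⁻¹(β), A)}` agree on all density operators iff
`g⁻¹(β) ∩ σ(A)` is a singleton. -/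
theorem stmt8 {n : ℕ} (hn : 0 < n)
    (A : Matrix (Fin n) (Fin n) ℂ) (hA : A.IsHermitian)
    (σA : Finset ℝ) (E : ℝ → Matrix (Fin n) (Fin n) ℂ)
    (hEherm : ∀ α ∈ σA, (E α).IsHermitian)
    (hEorth : ∀ α ∈ σA, ∀ α' ∈ σA, E α * E α' = if α = α' then E α else 0)
    (hEsum : ∑ α ∈ σA, E α = 1)
    (hE0 : ∀ α ∈ σA, E α ≠ 0)
    (hAdec : A = ∑ α ∈ σA, (α : ℂ) • E α)
    (g : ℝ → ℝ) (β : ℝ) (hβ : β ∈ σA.image g)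
    (Fβ : Matrix (Fin n) (Fin n) ℂ)
    (hFβ : Fβ = ∑ α ∈ σA.filter (fun α => g α = β), E α) :
    (∀ ρ : Matrix (Fin n) (Fin n) ℂ, ρ.PosSemidef → ρ.trace = 1 →
      (if (ρ * Fβ).trace = 0 then 0 else (ρ * Fβ).trace⁻¹ • (Fβ * ρ * Fβ)) =
      (if (ρ * Fβ).trace = 0 then 0 else
        (ρ * Fβ).trace⁻¹ • ∑ α ∈ σA.filter (fun α => g α = β), E α * ρ * E α))
    ↔ (σA.filter (fun α => g α = β)).card = 1 := by
  constructor
  · -- forward direction, by contradiction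
    intro hT
    by_contra hcard
    obtain ⟨α₀, hα₀A, hgα₀⟩ := Finset.mem_image.mp hβ
    have hα₀S : α₀ ∈ σA.filter (fun α => g α = β) := Finset.mem_filter.mpr ⟨hα₀A, hgα₀⟩
    have hpos : 0 < (σA.filter (fun α => g α = β)).card := Finset.card_pos.mpr ⟨α₀, hα₀S⟩
    have h2 : 1 < (σA.filter (fun α => g α = β)).card :=
      lt_of_le_of_ne hpos (Ne.symm hcard)
    obtain ⟨α₁, hα₁S, α₂, hα₂S, hne⟩ := Finset.one_lt_card.mp h2
    have hα₁A : α₁ ∈ σA := (Finset.mem_filter.mp hα₁S).1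
    have hα₂A : α₂ ∈ σA := (Finset.mem_filter.mp hα₂S).1
    obtain ⟨u₁, hu₁⟩ := exists_mulVec_ne' (hE0 α₁ hα₁A)
    obtain ⟨u₂, hu₂⟩ := exists_mulVec_ne' (hE0 α₂ hα₂A)
    set x := E α₁ *ᵥ u₁ with hxdef
    set y := E α₂ *ᵥ u₂ with hydef
    have hEx : ∀ α ∈ σA, E α *ᵥ x = if α = α₁ then x else 0 := by
      intro α hα
      rw [hxdef, Matrix.mulVec_mulVec, hEorth α hα α₁ hα₁A]
      split_ifs with h
      · subst h; rfl
      · exact Matrix.zero_mulVec u₁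
    have hEy : ∀ α ∈ σA, E α *ᵥ y = if α = α₂ then y else 0 := by
      intro α hα
      rw [hydef, Matrix.mulVec_mulVec, hEorth α hα α₂ hα₂A]
      split_ifs with h
      · subst h; rfl
      · exact Matrix.zero_mulVec u₂
    -- orthogonality of x and y
    have hE2x : E α₂ *ᵥ x = 0 := by rw [hEx α₂ hα₂A, if_neg (Ne.symm hne)]
    have hE2y : E α₂ *ᵥ y = y := by rw [hEy α₂ hα₂A, if_pos rfl]
    have hrow2 : star x ᵥ* E α₂ = 0 := by
      have h0 := congrArg star hE2x
      rw [Matrix.star_mulVec, hEherm α₂ hα₂A] at h0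
      simpa using h0
    have hxy : star x ⬝ᵥ y = 0 := by
      conv_lhs => rw [← hE2y]
      rw [Matrix.dotProduct_mulVec, hrow2, zero_dotProduct]
    set v : Fin n → ℂ := x + y with hvdef
    set M : Matrix (Fin n) (Fin n) ℂ := Matrix.of (fun i j => v i * star (v j)) with hMdef
    have hMvec : ∀ w, M *ᵥ w = (star v ⬝ᵥ w) • v := by
      intro w
      funext i
      simp only [hMdef, Matrix.mulVec, dotProduct, Matrix.of_apply,
        Pi.smul_apply, smul_eq_mul, Pi.star_apply, Finset.sum_mul]
      exact Finset.sum_congr rfl (fun j _ => by ring)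
    have hMH : M.IsHermitian := by
      rw [Matrix.IsHermitian]
      ext i j
      simp only [hMdef, Matrix.conjTranspose_apply, Matrix.of_apply, star_mul', star_star]
      ring
    have ht : M.trace = star v ⬝ᵥ v := by
      simp only [Matrix.trace, Matrix.diag, hMdef, dotProduct, Matrix.of_apply,
        Pi.star_apply]
      exact Finset.sum_congr rfl (fun i _ => by ring)
    have hE1v : E α₁ *ᵥ v = x := by
      rw [hvdef, Matrix.mulVec_add, hEx α₁ hα₁A, hEy α₁ hα₁A,
        if_pos rfl, if_neg hne, add_zero]
    have hE2v : E α₂ *ᵥ v = y := by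
      rw [hvdef, Matrix.mulVec_add, hEx α₂ hα₂A, hEy α₂ hα₂A,
        if_neg (Ne.symm hne), if_pos rfl, zero_add]
    have hv0 : v ≠ 0 := by
      intro h
      apply hu₁
      rw [← hE1v, h, Matrix.mulVec_zero]
    have ht0 : M.trace ≠ 0 := by
      rw [ht]
      exact fun h => hv0 (dotProduct_star_self_eq_zero.mp h)
    have htnn : (0 : ℂ) ≤ M.trace := by
      rw [ht]
      exact Finset.sum_nonneg fun i _ => star_mul_self_nonneg (v i)
    set t := M.trace with htdef
    -- t is a nonnegative real
    obtain ⟨htre, htim⟩ := Complex.nonneg_iff.mp htnn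
    have htreal : t = (t.re : ℂ) := by
      rw [Complex.ext_iff]; simp [htim]
    have htinv_nn : (0 : ℂ) ≤ t⁻¹ := by
      rw [htreal, ← Complex.ofReal_inv]
      exact Complex.zero_le_real.mpr (inv_nonneg.mpr htre)
    have htinv_star : star t⁻¹ = t⁻¹ := by
      rw [htreal, ← Complex.ofReal_inv, Complex.star_def, Complex.conj_ofReal]
    have htinv0 : t⁻¹ ≠ 0 := inv_ne_zero ht0
    set ρ : Matrix (Fin n) (Fin n) ℂ := t⁻¹ • M with hρdef
    have hρPSD : ρ.PosSemidef := by
      rw [Matrix.posSemidef_iff_dotProduct_mulVec]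
      constructor
      · rw [hρdef, Matrix.IsHermitian, Matrix.conjTranspose_smul, htinv_star, hMH]
      · intro w
        rw [hρdef, Matrix.smul_mulVec, dotProduct_smul, smul_eq_mul]
        apply mul_nonneg htinv_nn
        rw [hMvec, dotProduct_smul, smul_eq_mul]
        have hc : star w ⬝ᵥ v = star (star v ⬝ᵥ w) := by
          simp only [dotProduct, star_sum, star_mul', star_star, Pi.star_apply]
          exact Finset.sum_congr rfl (fun i _ => by ring)
        rw [hc]
        exact mul_star_self_nonneg _
    have hρtr : ρ.trace = 1 := by
      rw [hρdef, Matrix.trace_smul, ← htdef, smul_eq_mul, inv_mul_cancel₀ ht0]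
    -- Fβ acts as identity on ranges of E α for α ∈ S
    have hFβH : Fβᴴ = Fβ := by
      rw [hFβ, Matrix.conjTranspose_sum]
      exact Finset.sum_congr rfl fun α hα => hEherm α (Finset.mem_filter.mp hα).1
    have hFv : Fβ *ᵥ v = v := by
      rw [hFβ, sum_mulVec'']
      have hcong : ∀ α ∈ σA.filter (fun α => g α = β),
          E α *ᵥ v = (if α = α₁ then x else 0) + (if α = α₂ then y else 0) := by
        intro α hα
        have hαA : α ∈ σA := (Finset.mem_filter.mp hα).1
        rw [hvdef, Matrix.mulVec_add, hEx α hαA, hEy α hαA]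
      rw [Finset.sum_congr rfl hcong, Finset.sum_add_distrib,
        Finset.sum_ite_eq' _ α₁ (fun _ => x), Finset.sum_ite_eq' _ α₂ (fun _ => y),
        if_pos hα₁S, if_pos hα₂S]
    -- M * Fβ = M and Fβ * M = M
    have hFM : Fβ * M = M := by
      ext i k
      have : (Fβ * M) i k = (Fβ *ᵥ v) i * star (v k) := by
        simp only [Matrix.mul_apply, hMdef, Matrix.of_apply, Matrix.mulVec,
          dotProduct, Finset.sum_mul]
        exact Finset.sum_congr rfl (fun j _ => by ring)
      rw [this, hFv]
      rfl
    have hMF : M * Fβ = M := by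
      have h1 : (Fβ * M)ᴴ = Mᴴ := congrArg _ hFM
      rw [Matrix.conjTranspose_mul, hFβH, hMH] at h1
      exact h1
    have htr1 : (ρ * Fβ).trace = 1 := by
      rw [hρdef, Matrix.smul_mul, hMF, ← hρdef, hρtr]
    -- apply the hypothesis
    have heq := hT ρ hρPSD hρtr
    rw [htr1, if_neg one_ne_zero, if_neg one_ne_zero, inv_one, one_smul, one_smul] at heq
    -- simplify LHS of heq
    have hlhs : Fβ * ρ * Fβ = ρ := by
      rw [hρdef, Matrix.mul_smul, Matrix.smul_mul, hFM, hMF]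
    rw [hlhs] at heq
    -- cancel t⁻¹
    have heq2 : M = ∑ α ∈ σA.filter (fun α => g α = β), E α * M * E α := by
      have : t⁻¹ • M = t⁻¹ • ∑ α ∈ σA.filter (fun α => g α = β), E α * M * E α := by
        rw [← hρdef, heq, Finset.smul_sum]
        exact Finset.sum_congr rfl fun α _ => by
          rw [hρdef, Matrix.mul_smul, Matrix.smul_mul]
      exact smul_right_injective _ htinv0 this
    -- apply both sides to y
    set c : ℂ := star v ⬝ᵥ y with hcdef
    have hc0 : c ≠ 0 := by
      rw [hcdef, hvdef, star_add, add_dotProduct, hxy, zero_add]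
      exact fun h => hu₂ (dotProduct_star_self_eq_zero.mp h)
    have hMy : M *ᵥ y = c • v := by rw [hMvec, ← hcdef]
    have happ := congrArg (fun N => N *ᵥ y) heq2
    rw [hMy, sum_mulVec''] at happ
    have hterm : ∀ α ∈ σA.filter (fun α => g α = β),
        (E α * M * E α) *ᵥ y = if α = α₂ then c • y else 0 := by
      intro α hα
      have hαA : α ∈ σA := (Finset.mem_filter.mp hα).1
      rw [← Matrix.mulVec_mulVec, ← Matrix.mulVec_mulVec, hEy α hαA]
      split_ifs with h
      · rw [hMy, Matrix.mulVec_smul, h, hE2v]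
      · rw [Matrix.mulVec_zero, Matrix.mulVec_zero]
    rw [Finset.sum_congr rfl hterm,
      Finset.sum_ite_eq' _ α₂ (fun _ => c • y), if_pos hα₂S] at happ
    -- c • v = c • y implies c • x = 0, i.e. x = 0, contradiction
    have hx0 : c • x = 0 := by
      have := happ
      rw [hvdef, smul_add] at this
      have h2 : c • x + c • y - c • y = c • y - c • y := by rw [this]
      simpa using h2
    rcases smul_eq_zero.mp hx0 with h | h
    · exact hc0 h
    · exact hu₁ h
  · -- reverse direction
    intro h ρ _ _
    obtain ⟨a, ha⟩ := Finset.card_eq_one.mp h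
    simp only [hFβ, ha, Finset.sum_singleton]
end

section
/- Let A be a self-adjoint operator on a finite-dimensional complex Hilbert space with eigenprojections {E_α}, let Δ ⊆ σ(A) contain two distinct eigenvalues α₀ ≠ α₁, and suppose g : ℝ → ℝ is constant on Δ with value β and g⁻¹(β) ∩ σ(A) = Δ. Let φ₀, φ₁ be unit eigenvectors for α₀, α₁ and ψ = (φ₀+φ₁)/√2. Then ψ is an eigenvector of g(A) with eigenvalue β, the update T_{(β,g(A))}(|ψ⟩⟨ψ|) = |ψ⟩⟨ψ|, while T_{(Δ,A)}(|ψ⟩⟨ψ|) = (1/2)(|φ₀⟩⟨φ₀| + |φ₁⟩⟨φ₁|) ≠ |ψ⟩⟨ψ|. -/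
open Matrix
open scoped Classical

lemma sumMulVec {n : ℕ} (s : Finset ℝ) (M : ℝ → Matrix (Fin n) (Fin n) ℂ) (v : Fin n → ℂ) :
    (∑ α ∈ s, M α) *ᵥ v = ∑ α ∈ s, M α *ᵥ v := by
  ext i
  rw [Finset.sum_apply]
  simp only [mulVec, dotProduct]
  rw [show ((∑ α ∈ s, M α) i) = ∑ α ∈ s, M α i by funext j; rw [Matrix.sum_apply, Finset.sum_apply]]
  simp only [Finset.sum_apply, Finset.sum_mul]
  exact Finset.sum_comm

lemma mulVecMulVec {n : ℕ} (M : Matrix (Fin n) (Fin n) ℂ) (u v : Fin n → ℂ) :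
    M * vecMulVec u v = vecMulVec (M *ᵥ u) v := by
  ext i j; simp [mul_apply, vecMulVec_apply, mulVec, dotProduct, Finset.sum_mul, mul_assoc]

lemma vecMulVecMul {n : ℕ} (M : Matrix (Fin n) (Fin n) ℂ) (u v : Fin n → ℂ) :
    vecMulVec u v * M = vecMulVec u (v ᵥ* M) := by
  ext i j; simp [mul_apply, vecMulVec_apply, vecMul, dotProduct, Finset.mul_sum, mul_assoc]

lemma vecMulVecMulVec {n : ℕ} (u v w : Fin n → ℂ) :
    vecMulVec u v *ᵥ w = (v ⬝ᵥ w) • u := by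
  ext i; simp [mulVec, vecMulVec_apply, dotProduct, Finset.mul_sum, mul_assoc, mul_comm]
  ring_nf
  exact Finset.sum_congr rfl fun x _ => by ring

lemma starVecMulHerm {n : ℕ} (M : Matrix (Fin n) (Fin n) ℂ) (hM : M.IsHermitian) (x : Fin n → ℂ) :
    star x ᵥ* M = star (M *ᵥ x) := by
  ext j
  simp only [vecMul, mulVec, dotProduct, Pi.star_apply, star_sum, star_mul']
  refine Finset.sum_congr rfl fun i _ => ?_
  rw [← hM.apply i j]
  simp [mul_comm]

lemma traceVecMulVec {n : ℕ} (u v : Fin n → ℂ) : (vecMulVec u v).trace = v ⬝ᵥ u := by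
  simp [trace, diag, vecMulVec_apply, dotProduct, mul_comm]

lemma smulVecMulVec {n : ℕ} (c : ℂ) (u : Fin n → ℂ) :
    vecMulVec (c • u) (star (c • u)) = (c * star c) • vecMulVec u (star u) := by
  ext i j; simp [vecMulVec_apply]; ring

/-- Let `A = ∑ α ∈ σA, α • E α` be the spectral decomposition of the
self-adjoint `A`, let `Δ ⊆ σA` contain distinct eigenvalues `α₀ ≠ α₁`, and let
`g : ℝ → ℝ` be constant on `Δ` with value `β` and `g⁻¹(β) ∩ σA = Δ`. Let `φ₀, φ₁`
be unit eigenvectors for `α₀, α₁` and `ψ = (φ₀ + φ₁)/√2`. Then `ψ` is an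
eigenvector of `g(A)` with eigenvalue `β`, the update `T_{(β, g(A))}` fixes the
pure state `|ψ⟩⟨ψ|`, while `T_{(Δ, A)}(|ψ⟩⟨ψ|) = (1/2)(|φ₀⟩⟨φ₀| + |φ₁⟩⟨φ₁|) ≠ |ψ⟩⟨ψ|`. -/
theorem stmt9 {n : ℕ}
    (A : Matrix (Fin n) (Fin n) ℂ) (hA : A.IsHermitian)
    (σA : Finset ℝ) (E : ℝ → Matrix (Fin n) (Fin n) ℂ)
    (hEherm : ∀ α ∈ σA, (E α).IsHermitian)
    (hEorth : ∀ α ∈ σA, ∀ α' ∈ σA, E α * E α' = if α = α' then E α else 0)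
    (hEsum : ∑ α ∈ σA, E α = 1)
    (hAdec : A = ∑ α ∈ σA, (α : ℂ) • E α)
    (Δ : Finset ℝ) (hΔ : Δ ⊆ σA)
    (α₀ α₁ : ℝ) (hα₀ : α₀ ∈ Δ) (hα₁ : α₁ ∈ Δ) (hαne : α₀ ≠ α₁)
    (g : ℝ → ℝ) (β : ℝ)
    (hgconst : ∀ α ∈ Δ, g α = β)
    (hfiber : σA.filter (fun α => g α = β) = Δ)
    (φ₀ φ₁ : Fin n → ℂ)
    (hu₀ : star φ₀ ⬝ᵥ φ₀ = 1) (hu₁ : star φ₁ ⬝ᵥ φ₁ = 1)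
    (hφ₀ : A *ᵥ φ₀ = (α₀ : ℂ) • φ₀) (hφ₁ : A *ᵥ φ₁ = (α₁ : ℂ) • φ₁)
    (ψ : Fin n → ℂ) (hψ : ψ = ((Real.sqrt 2 : ℂ))⁻¹ • (φ₀ + φ₁)) :
    (∑ α ∈ σA, (g α : ℂ) • E α) *ᵥ ψ = (β : ℂ) • ψ ∧
    ((vecMulVec ψ (star ψ) * ∑ α ∈ Δ, E α).trace⁻¹ •
        ((∑ α ∈ Δ, E α) * vecMulVec ψ (star ψ) * ∑ α ∈ Δ, E α))
      = vecMulVec ψ (star ψ) ∧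
    ((vecMulVec ψ (star ψ) * ∑ α ∈ Δ, E α).trace⁻¹ •
        ∑ α ∈ Δ, E α * vecMulVec ψ (star ψ) * E α)
      = (2 : ℂ)⁻¹ • (vecMulVec φ₀ (star φ₀) + vecMulVec φ₁ (star φ₁)) ∧
    (2 : ℂ)⁻¹ • (vecMulVec φ₀ (star φ₀) + vecMulVec φ₁ (star φ₁))
      ≠ vecMulVec ψ (star ψ) := by
  have hα₀σ : α₀ ∈ σA := hΔ hα₀
  have hα₁σ : α₁ ∈ σA := hΔ hα₁
  set c2 : ℂ := ((Real.sqrt 2 : ℂ))⁻¹ with hc2def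
  have hsqrt : ((Real.sqrt 2 : ℝ) : ℂ) * ((Real.sqrt 2 : ℝ) : ℂ) = 2 := by
    norm_cast
    exact Real.mul_self_sqrt (by norm_num)
  have hc2 : c2 * c2 = (2 : ℂ)⁻¹ := by
    rw [hc2def, ← mul_inv, hsqrt]
  have hstarc2 : star c2 = c2 := by
    rw [hc2def]
    simp [Complex.star_def, Complex.conj_ofReal, ← Complex.conj_inv]
  -- key spectral facts
  have key0 : ∀ (c : ℝ) (v : Fin n → ℂ), A *ᵥ v = (c : ℂ) • v →
      ∀ α ∈ σA, α ≠ c → E α *ᵥ v = 0 := by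
    intro c v hv α hα hne
    have hEA : E α * A = (α : ℂ) • E α := by
      rw [hAdec, Finset.mul_sum]
      have h1 : ∀ α' ∈ σA, E α * ((α' : ℂ) • E α') =
          if α = α' then (α' : ℂ) • E α else 0 := by
        intro α' hα'
        rw [Matrix.mul_smul, hEorth α hα α' hα']
        split_ifs <;> simp
      rw [Finset.sum_congr rfl h1, Finset.sum_ite_eq, if_pos hα]
    have h2 : (α : ℂ) • (E α *ᵥ v) = (c : ℂ) • (E α *ᵥ v) := by
      calc (α : ℂ) • (E α *ᵥ v) = ((α : ℂ) • E α) *ᵥ v := by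
            rw [Matrix.smul_mulVec]
        _ = (E α * A) *ᵥ v := by rw [hEA]
        _ = E α *ᵥ (A *ᵥ v) := by rw [Matrix.mulVec_mulVec]
        _ = (c : ℂ) • (E α *ᵥ v) := by rw [hv, Matrix.mulVec_smul]
    have h3 : ((α : ℂ) - (c : ℂ)) • (E α *ᵥ v) = 0 := by
      rw [sub_smul, h2, sub_self]
    rcases smul_eq_zero.mp h3 with h | h
    · exact absurd (Complex.ofReal_inj.mp (sub_eq_zero.mp h)) hne
    · exact h
  have key1 : ∀ (c : ℝ), c ∈ σA → ∀ (v : Fin n → ℂ), A *ᵥ v = (c : ℂ) • v →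
      E c *ᵥ v = v := by
    intro c hc v hv
    have h1 : ∑ α ∈ σA, E α *ᵥ v = v := by
      rw [← sumMulVec, hEsum, Matrix.one_mulVec]
    have h2 := Finset.sum_eq_single (s := σA) (f := fun α => E α *ᵥ v) c
      (fun α hα hne => key0 c v hv α hα hne) (fun h => absurd hc h)
    exact h2.symm.trans h1
  have hE₀ : ∀ α ∈ σA, E α *ᵥ φ₀ = if α = α₀ then φ₀ else 0 := by
    intro α hα
    split_ifs with h
    · subst h; exact key1 α hα φ₀ hφ₀
    · exact key0 α₀ φ₀ hφ₀ α hα h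
  have hE₁ : ∀ α ∈ σA, E α *ᵥ φ₁ = if α = α₁ then φ₁ else 0 := by
    intro α hα
    split_ifs with h
    · subst h; exact key1 α hα φ₁ hφ₁
    · exact key0 α₁ φ₁ hφ₁ α hα h
  -- orthogonality
  have horth : star φ₀ ⬝ᵥ φ₁ = 0 := by
    have h1 : E α₁ *ᵥ φ₁ = φ₁ := key1 α₁ hα₁σ φ₁ hφ₁
    have h2 : E α₁ *ᵥ φ₀ = 0 := key0 α₀ φ₀ hφ₀ α₁ hα₁σ hαne.symm
    calc star φ₀ ⬝ᵥ φ₁ = star φ₀ ⬝ᵥ (E α₁ *ᵥ φ₁) := by rw [h1]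
      _ = (star φ₀ ᵥ* E α₁) ⬝ᵥ φ₁ := by rw [Matrix.dotProduct_mulVec]
      _ = star (E α₁ *ᵥ φ₀) ⬝ᵥ φ₁ := by rw [starVecMulHerm _ (hEherm α₁ hα₁σ)]
      _ = 0 := by rw [h2]; simp
  have horth' : star φ₁ ⬝ᵥ φ₀ = 0 := by
    have h1 : E α₀ *ᵥ φ₀ = φ₀ := key1 α₀ hα₀σ φ₀ hφ₀
    have h2 : E α₀ *ᵥ φ₁ = 0 := key0 α₁ φ₁ hφ₁ α₀ hα₀σ hαne
    calc star φ₁ ⬝ᵥ φ₀ = star φ₁ ⬝ᵥ (E α₀ *ᵥ φ₀) := by rw [h1]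
      _ = (star φ₁ ᵥ* E α₀) ⬝ᵥ φ₀ := by rw [Matrix.dotProduct_mulVec]
      _ = star (E α₀ *ᵥ φ₁) ⬝ᵥ φ₀ := by rw [starVecMulHerm _ (hEherm α₀ hα₀σ)]
      _ = 0 := by rw [h2]; simp
  have hstarψ : star ψ = c2 • (star φ₀ + star φ₁) := by
    rw [hψ, star_smul, star_add, hstarc2]
  -- action of projections on ψ
  have hEψ : ∀ α ∈ σA, E α *ᵥ ψ =
      if α = α₀ then c2 • φ₀ else if α = α₁ then c2 • φ₁ else 0 := by
    intro α hα
    rw [hψ, Matrix.mulVec_smul, Matrix.mulVec_add, hE₀ α hα, hE₁ α hα]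
    split_ifs with h h'
    · exact absurd (h.symm.trans h') hαne
    · simp
    · simp
    · simp
  have hermEΔ : (∑ α ∈ Δ, E α).IsHermitian := by
    unfold Matrix.IsHermitian
    rw [show (∑ α ∈ Δ, E α)ᴴ = ∑ α ∈ Δ, (E α)ᴴ by
      ext i j; simp [conjTranspose_apply, Matrix.sum_apply, map_sum]]
    exact Finset.sum_congr rfl fun α hα => hEherm α (hΔ hα)
  have hEΔψ : (∑ α ∈ Δ, E α) *ᵥ ψ = ψ := by
    rw [sumMulVec]
    have h1 : ∀ α ∈ Δ, E α *ᵥ ψ =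
        (if α = α₀ then c2 • φ₀ else 0) + (if α = α₁ then c2 • φ₁ else 0) := by
      intro α hα
      rw [hEψ α (hΔ hα)]
      split_ifs with h h'
      · exact absurd (h.symm.trans h') hαne
      · simp
      · simp
      · simp
    rw [Finset.sum_congr rfl h1, Finset.sum_add_distrib,
      Finset.sum_ite_eq' Δ α₀, Finset.sum_ite_eq' Δ α₁, if_pos hα₀, if_pos hα₁,
      hψ, smul_add]
  have hψunit : star ψ ⬝ᵥ ψ = 1 := by
    rw [hstarψ, hψ]
    simp only [smul_dotProduct, dotProduct_smul, add_dotProduct, dotProduct_add,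
      hu₀, hu₁, horth, horth', smul_eq_mul]
    have h2 : c2 * (c2 * (1 + 0) + c2 * (0 + 1)) = c2 * c2 * 2 := by ring
    rw [h2, hc2]; norm_num
  have hPE : vecMulVec ψ (star ψ) * (∑ α ∈ Δ, E α) = vecMulVec ψ (star ψ) := by
    rw [vecMulVecMul, starVecMulHerm _ hermEΔ, hEΔψ]
  have htr : (vecMulVec ψ (star ψ) * ∑ α ∈ Δ, E α).trace = 1 := by
    rw [hPE, traceVecMulVec, hψunit]
  refine ⟨?_, ?_, ?_, ?_⟩
  · -- part 1
    rw [sumMulVec]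
    have h1 : ∀ α ∈ σA, ((g α : ℂ) • E α) *ᵥ ψ =
        (if α = α₀ then (β : ℂ) • (c2 • φ₀) else 0) +
        (if α = α₁ then (β : ℂ) • (c2 • φ₁) else 0) := by
      intro α hα
      rw [Matrix.smul_mulVec, hEψ α hα]
      by_cases h : α = α₀
      · simp [h, hαne, hgconst α₀ hα₀]
      · by_cases h' : α = α₁
        · simp [h', Ne.symm hαne, hgconst α₁ hα₁]
        · simp [h, h']
    rw [Finset.sum_congr rfl h1, Finset.sum_add_distrib,
      Finset.sum_ite_eq' σA α₀, Finset.sum_ite_eq' σA α₁, if_pos hα₀σ, if_pos hα₁σ,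
      hψ, smul_add, smul_add]
  · -- part 2
    rw [htr, inv_one, one_smul, mulVecMulVec, hEΔψ, hPE]
  · -- part 3
    rw [htr, inv_one, one_smul]
    have h1 : ∀ α ∈ Δ, E α * vecMulVec ψ (star ψ) * E α =
        (if α = α₀ then (2 : ℂ)⁻¹ • vecMulVec φ₀ (star φ₀) else 0) +
        (if α = α₁ then (2 : ℂ)⁻¹ • vecMulVec φ₁ (star φ₁) else 0) := by
      intro α hα
      rw [mulVecMulVec, vecMulVecMul, starVecMulHerm _ (hEherm α (hΔ hα)),
        hEψ α (hΔ hα)]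
      split_ifs with h h'
      · exact absurd (h.symm.trans h') hαne
      · rw [smulVecMulVec, hstarc2, hc2]; simp
      · rw [smulVecMulVec, hstarc2, hc2]; simp
      · ext i j; simp [vecMulVec_apply]
    rw [Finset.sum_congr rfl h1, Finset.sum_add_distrib,
      Finset.sum_ite_eq' Δ α₀, Finset.sum_ite_eq' Δ α₁, if_pos hα₀, if_pos hα₁,
      smul_add]
  · -- part 4
    intro h
    have h2 := congrArg (fun M => M *ᵥ φ₁) h
    simp only [Matrix.smul_mulVec, Matrix.add_mulVec, vecMulVecMulVec,
      horth, hu₁, zero_smul, one_smul, zero_add] at h2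
    have h3 : star ψ ⬝ᵥ φ₁ = c2 := by
      rw [hstarψ]
      simp only [smul_dotProduct, add_dotProduct, horth, hu₁, smul_eq_mul]
      ring
    rw [h3, hψ, smul_smul, hc2, smul_add] at h2
    have h4 : (2 : ℂ)⁻¹ • φ₀ = 0 := by
      have := h2
      rw [right_eq_add] at this
      exact this
    have h5 : φ₀ = 0 := by
      rcases smul_eq_zero.mp h4 with h | h
      · norm_num at h
      · exact h
    rw [h5] at hu₀
    simp at hu₀
end

section
/- Let H be a finite-dimensional complex Hilbert space and V a map from self-adjoint operators on H to ℝ satisfying the functional composition principle: V(g(A)) = g(V(A)) for every self-adjoint A and every function g : ℝ → ℝ (with g(A) defined via the spectral decomposition). Then V is quasi-linear and multiplicative on commuting operators: for all commuting self-adjoint A, B and all real α, β, V(αA + βB) = αV(A) + βV(B) and V(AB) = V(A)V(B). -/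
open Matrix

/-- If `V` maps self-adjoint operators on a finite-dimensional
complex Hilbert space to `ℝ` and satisfies the functional composition principle
(`V (g(A)) = g (V A)` whenever `A = ∑ α ∈ σA, α • E α` is a spectral decomposition
and `g(A) = ∑ α ∈ σA, g α • E α`), then `V` is quasi-linear and multiplicative on
commuting self-adjoint operators. -/
theorem stmt16 {n : ℕ} (V : Matrix (Fin n) (Fin n) ℂ → ℝ)
    (hFCP : ∀ (A : Matrix (Fin n) (Fin n) ℂ), A.IsHermitian →
      ∀ (σA : Finset ℝ) (E : ℝ → Matrix (Fin n) (Fin n) ℂ),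
        (∀ α ∈ σA, (E α).IsHermitian) →
        (∀ α ∈ σA, ∀ α' ∈ σA, E α * E α' = if α = α' then E α else 0) →
        (∑ α ∈ σA, E α = 1) →
        (A = ∑ α ∈ σA, (α : ℂ) • E α) →
        ∀ g : ℝ → ℝ, V (∑ α ∈ σA, (g α : ℂ) • E α) = g (V A)) :
    ∀ (A B : Matrix (Fin n) (Fin n) ℂ), A.IsHermitian → B.IsHermitian →
      A * B = B * A → ∀ a b : ℝ,
        V ((a : ℂ) • A + (b : ℂ) • B) = a * V A + b * V B ∧
        V (A * B) = V A * V B := by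
  classical
  intro A B hA hB hAB a b
  set Eu := EuclideanSpace ℂ (Fin n)
  set TA : Eu →ₗ[ℂ] Eu := Matrix.toEuclideanLin A with hTAdef
  set TB : Eu →ₗ[ℂ] Eu := Matrix.toEuclideanLin B with hTBdef
  have hA' : TA.IsSymmetric := Matrix.isHermitian_iff_isSymmetric.mp hA
  have hB' : TB.IsSymmetric := Matrix.isHermitian_iff_isSymmetric.mp hB
  have hmul : ∀ M N : Matrix (Fin n) (Fin n) ℂ,
      Matrix.toEuclideanLin (M * N)
        = (Matrix.toEuclideanLin M) ∘ₗ (Matrix.toEuclideanLin N) := by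
    intro M N
    rw [Matrix.toEuclideanLin_eq_toLin,
      Matrix.toLin_mul _ (PiLp.basisFun 2 ℂ (Fin n)) _]
  have hComm : Commute TA TB := by
    have h := congrArg Matrix.toEuclideanLin hAB
    rw [hmul, hmul] at h
    exact h
  -- joint eigenspaces
  set W : ℂ × ℂ → Submodule ℂ Eu :=
    fun i => Module.End.eigenspace TA i.2 ⊓ Module.End.eigenspace TB i.1 with hWdef
  have hInt : DirectSum.IsInternal W :=
    hA'.directSum_isInternal_of_commute hB' hComm
  have hOrthFam := LinearMap.IsSymmetric.orthogonalFamily_eigenspace_inf_eigenspace hA' hB'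
  haveI : Fintype {i : ℂ × ℂ // W i ≠ ⊥} :=
    hInt.submodule_iSupIndep.fintypeNeBotOfFiniteDimensional
  set ι := {i : ℂ × ℂ // W i ≠ ⊥}
  -- projections
  set P : ι → (Eu →ₗ[ℂ] Eu) :=
    fun s => ((W s.val).subtypeL ∘L Submodule.orthogonalProjectionOnto (W s.val)).toLinearMap with hPdef
  have hP_apply : ∀ (s : ι) (v : Eu), P s v = (Submodule.orthogonalProjectionOnto (W s.val) v : Eu) :=
    fun s v => rfl
  have hP_mem : ∀ (s : ι), ∀ v ∈ W s.val, P s v = v := by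
    intro s v hv
    rw [hP_apply, ← Submodule.starProjection_apply, Submodule.starProjection_eq_self_iff]
    exact hv
  have hP_mem' : ∀ (s : ι) (v : Eu), P s v ∈ W s.val := by
    intro s v
    rw [hP_apply]
    exact Submodule.coe_mem _
  have hP_zero : ∀ s t : ι, s ≠ t → ∀ v ∈ W t.val, P s v = 0 := by
    intro s t hst v hv
    have hne : s.val ≠ t.val := fun h => hst (Subtype.ext h)
    have hv' : v ∈ (W s.val)ᗮ := by
      rw [Submodule.mem_orthogonal]
      intro u hu
      exact hOrthFam hne (⟨u, hu⟩ : W s.val) (⟨v, hv⟩ : W t.val)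
    rw [hP_apply]
    rw [Submodule.orthogonalProjectionOnto_apply_of_mem_orthogonal hv']
    simp
  -- eigenvalues are real
  have hreal2 : ∀ s : ι, ((s.val.2.re : ℝ) : ℂ) = s.val.2 := by
    intro s
    apply Complex.conj_eq_iff_re.mp
    apply hA'.conj_eigenvalue_eq_self
    intro hbot
    exact s.property (le_bot_iff.mp (le_trans inf_le_left (le_of_eq hbot)))
  have hreal1 : ∀ s : ι, ((s.val.1.re : ℝ) : ℂ) = s.val.1 := by
    intro s
    apply Complex.conj_eq_iff_re.mp
    apply hB'.conj_eigenvalue_eq_self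
    intro hbot
    exact s.property (le_bot_iff.mp (le_trans inf_le_right (le_of_eq hbot)))
  set aF : ι → ℝ := fun s => s.val.2.re with haFdef
  set bF : ι → ℝ := fun s => s.val.1.re with hbFdef
  -- extensionality principle
  have ext_lemma : ∀ (F G : Eu →ₗ[ℂ] Eu),
      (∀ i : ℂ × ℂ, ∀ v ∈ W i, F v = G v) → F = G := by
    intro F G h
    refine LinearMap.ext fun v => ?_
    have hv : v ∈ ⨆ i, W i := by
      rw [hInt.submodule_iSup_eq_top]; trivial
    exact Submodule.iSup_induction W (motive := fun x => F x = G x) hv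
      (fun i x hx => h i x hx) (by simp)
      (fun x y hx hy => show F (x + y) = G (x + y) by rw [map_add, map_add, hx, hy])
  -- generic collapse of sums on W i
  have collapse : ∀ (r : ι → ℂ) (i : ℂ × ℂ), ∀ v ∈ W i,
      (∑ s : ι, r s • P s) v = (if h : W i = ⊥ then 0 else r ⟨i, h⟩ • v) := by
    intro r i v hv
    by_cases hbot : W i = ⊥
    · have hv0 : v = 0 := by rw [hbot] at hv; simpa using hv
      simp [hv0, hbot]
    · rw [dif_neg hbot]
      set s₀ : ι := ⟨i, hbot⟩
      rw [LinearMap.sum_apply]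
      rw [Finset.sum_eq_single s₀]
      · rw [LinearMap.smul_apply, hP_mem s₀ v hv]
      · intro t _ hts
        rw [LinearMap.smul_apply, hP_zero t s₀ hts v hv, smul_zero]
      · intro habs; exact absurd (Finset.mem_univ s₀) habs
  have hSumP : ∑ s : ι, P s = LinearMap.id := by
    apply ext_lemma
    intro i v hv
    have := collapse (fun _ => (1 : ℂ)) i v hv
    simp only [one_smul] at this
    by_cases hbot : W i = ⊥
    · have hv0 : v = 0 := by rw [hbot] at hv; simpa using hv
      simp [hv0]
    · rw [dif_neg hbot] at this
      simpa using this
  have hTA_eq : TA = ∑ s : ι, (s.val.2 : ℂ) • P s := by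
    refine (ext_lemma _ _ ?_).symm
    intro i v hv
    rw [collapse (fun s => s.val.2) i v hv]
    by_cases hbot : W i = ⊥
    · have hv0 : v = 0 := by rw [hbot] at hv; simpa using hv
      simp [hv0]
    · rw [dif_neg hbot]
      exact (Module.End.mem_eigenspace_iff.mp hv.1).symm
  have hTB_eq : TB = ∑ s : ι, (s.val.1 : ℂ) • P s := by
    refine (ext_lemma _ _ ?_).symm
    intro i v hv
    rw [collapse (fun s => s.val.1) i v hv]
    by_cases hbot : W i = ⊥
    · have hv0 : v = 0 := by rw [hbot] at hv; simpa using hv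
      simp [hv0]
    · rw [dif_neg hbot]
      exact (Module.End.mem_eigenspace_iff.mp hv.2).symm
  -- matrix projections
  set Q : ι → Matrix (Fin n) (Fin n) ℂ :=
    fun s => Matrix.toEuclideanLin.symm (P s) with hQdef
  have hQ : ∀ s, Matrix.toEuclideanLin (Q s) = P s := by
    intro s; rw [hQdef]; exact Matrix.toEuclideanLin.apply_symm_apply _
  have hQHerm : ∀ s, (Q s).IsHermitian := by
    intro s
    rw [Matrix.isHermitian_iff_isSymmetric, hQ s, hPdef]
    exact Submodule.starProjection_isSymmetric (W s.val)
  have hQmul : ∀ s t, Q s * Q t = if s = t then Q s else 0 := by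
    intro s t
    apply Matrix.toEuclideanLin.injective
    rw [hmul, hQ, hQ]
    by_cases h : s = t
    · subst h
      rw [if_pos rfl, hQ]
      exact LinearMap.ext fun v => hP_mem s _ (hP_mem' s v)
    · rw [if_neg h, map_zero]
      exact LinearMap.ext fun v => hP_zero s t h _ (hP_mem' t v)
  have hQsum : ∑ s : ι, Q s = 1 := by
    apply Matrix.toEuclideanLin.injective
    rw [map_sum]
    simp_rw [hQ]
    rw [hSumP, Matrix.toEuclideanLin_eq_toLin, Matrix.toLin_one]
  have hAQ : A = ∑ s : ι, ((aF s : ℝ) : ℂ) • Q s := by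
    apply Matrix.toEuclideanLin.injective
    rw [map_sum, ← hTAdef, hTA_eq]
    refine Finset.sum_congr rfl fun s _ => ?_
    rw [_root_.map_smul, hQ, hreal2 s]
  have hBQ : B = ∑ s : ι, ((bF s : ℝ) : ℂ) • Q s := by
    apply Matrix.toEuclideanLin.injective
    rw [map_sum, ← hTBdef, hTB_eq]
    refine Finset.sum_congr rfl fun s _ => ?_
    rw [_root_.map_smul, hQ, hreal1 s]
  -- real labels
  set e : ι ≃ Fin (Fintype.card ι) := Fintype.equivFin ι
  set c : ι → ℝ := fun s => ((e s : ℕ) : ℝ) with hcdef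
  have hc_inj : Function.Injective c := by
    intro s t h
    apply e.injective
    exact Fin.ext (Nat.cast_injective h)
  set σ : Finset ℝ := Finset.univ.image c with hσdef
  set EE : ℝ → Matrix (Fin n) (Fin n) ℂ := Function.extend c Q 0 with hEEdef
  set fA : ℝ → ℝ := Function.extend c aF 0 with hfAdef
  set fB : ℝ → ℝ := Function.extend c bF 0 with hfBdef
  have hEE : ∀ s, EE (c s) = Q s := fun s => hc_inj.extend_apply Q 0 s
  have hfA : ∀ s, fA (c s) = aF s := fun s => hc_inj.extend_apply aF 0 s
  have hfB : ∀ s, fB (c s) = bF s := fun s => hc_inj.extend_apply bF 0 s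
  have hsum_image : ∀ {M : Type} [AddCommMonoid M] (f : ℝ → M),
      ∑ α ∈ σ, f α = ∑ s : ι, f (c s) := by
    intro M _ f
    exact Finset.sum_image fun x _ y _ h => hc_inj h
  set C : Matrix (Fin n) (Fin n) ℂ := ∑ s : ι, ((c s : ℝ) : ℂ) • Q s with hCdef
  have hCHerm : C.IsHermitian := by
    rw [Matrix.IsHermitian, hCdef, Matrix.conjTranspose_sum]
    refine Finset.sum_congr rfl fun s _ => ?_
    rw [Matrix.conjTranspose_smul, (hQHerm s).eq, Complex.star_def,
      Complex.conj_ofReal]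
  -- hypotheses of hFCP
  have h1 : ∀ α ∈ σ, (EE α).IsHermitian := by
    intro α hα
    obtain ⟨s, _, rfl⟩ := Finset.mem_image.mp hα
    rw [hEE]; exact hQHerm s
  have h2 : ∀ α ∈ σ, ∀ α' ∈ σ, EE α * EE α' = if α = α' then EE α else 0 := by
    intro α hα α' hα'
    obtain ⟨s, _, rfl⟩ := Finset.mem_image.mp hα
    obtain ⟨t, _, rfl⟩ := Finset.mem_image.mp hα'
    rw [hEE, hEE, hQmul]
    by_cases h : s = t
    · subst h; simp [hEE]
    · rw [if_neg h, if_neg (fun hc => h (hc_inj hc))]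
  have h3 : ∑ α ∈ σ, EE α = 1 := by
    rw [hsum_image EE]
    simp_rw [hEE]
    exact hQsum
  have h4 : C = ∑ α ∈ σ, (α : ℂ) • EE α := by
    rw [hsum_image (fun α => (α : ℂ) • EE α), hCdef]
    refine Finset.sum_congr rfl fun s _ => ?_
    rw [hEE]
  have key := hFCP C hCHerm σ EE h1 h2 h3 h4
  -- V A and V B
  have hA_sum : (∑ α ∈ σ, ((fA α : ℝ) : ℂ) • EE α) = A := by
    rw [hsum_image (fun α => ((fA α : ℝ) : ℂ) • EE α)]
    rw [hAQ]
    refine Finset.sum_congr rfl fun s _ => ?_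
    rw [hEE, hfA]
  have hB_sum : (∑ α ∈ σ, ((fB α : ℝ) : ℂ) • EE α) = B := by
    rw [hsum_image (fun α => ((fB α : ℝ) : ℂ) • EE α)]
    rw [hBQ]
    refine Finset.sum_congr rfl fun s _ => ?_
    rw [hEE, hfB]
  have hVA : V A = fA (V C) := by
    have := key fA
    rw [hA_sum] at this
    exact this
  have hVB : V B = fB (V C) := by
    have := key fB
    rw [hB_sum] at this
    exact this
  constructor
  · -- linearity
    have hg := key (fun r => a * fA r + b * fB r)
    have hlhs : (∑ α ∈ σ, ((a * fA α + b * fB α : ℝ) : ℂ) • EE α)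
        = (a : ℂ) • A + (b : ℂ) • B := by
      rw [hsum_image (fun α => ((a * fA α + b * fB α : ℝ) : ℂ) • EE α)]
      rw [hAQ, hBQ, Finset.smul_sum, Finset.smul_sum, ← Finset.sum_add_distrib]
      refine Finset.sum_congr rfl fun s _ => ?_
      rw [hEE, hfA, hfB, smul_smul, smul_smul, ← add_smul]
      norm_cast
    rw [hlhs] at hg
    rw [hg, hVA, hVB]
  · -- multiplicativity
    have hg := key (fun r => fA r * fB r)
    have hlhs : (∑ α ∈ σ, ((fA α * fB α : ℝ) : ℂ) • EE α) = A * B := by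
      rw [hsum_image (fun α => ((fA α * fB α : ℝ) : ℂ) • EE α)]
      rw [hAQ, hBQ, Finset.sum_mul]
      refine Finset.sum_congr rfl fun s _ => ?_
      rw [Finset.mul_sum]
      have hterm : ∀ t, (((aF s : ℝ) : ℂ) • Q s) * (((bF t : ℝ) : ℂ) • Q t)
          = (((aF s : ℝ) : ℂ) * ((bF t : ℝ) : ℂ)) • (if s = t then Q s else 0) := by
        intro t
        rw [Matrix.smul_mul, Matrix.mul_smul, hQmul, smul_smul]
      simp_rw [hterm]
      rw [Finset.sum_eq_single s]
      · rw [if_pos rfl, hEE, hfA, hfB]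
        norm_cast
      · intro t _ hts
        rw [if_neg (fun h => hts h.symm), smul_zero]
      · intro habs; exact absurd (Finset.mem_univ s) habs
    rw [hlhs] at hg
    rw [hg, hVA, hVB]
end
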